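/- Let n be a natural number, λ : Fin n → ℝ arbitrary, and R > 0. Let f : ℂⁿ → ℂ be holomorphic on an open set containing the closed polydisc {z : |z_j| ≤ R for all j}. Then |f(0)|² · ∫_{Δ_R} e^{−φ₀(z)} dz ≤ ∫_{Δ_R} |f(z)|² e^{−φ₀(z)} dz, where Δ_R = {z ∈ ℂⁿ : |z_j| < R for all j} and the integrals are with respect to Lebesgue measure on ℂⁿ ≅ ℝ^{2n}. -/

import Mathlib

open scoped ENNReal NNReal Real
open MeasureTheory Complex Metric Set

lemma circle_mean_value_aux {g : ℂ → ℂ} (hg : DifferentiableOn ℂ g (closedBall 0 1)) :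
    ∫ θ in (0:ℝ)..(2 * Real.pi), g (circleMap 0 1 θ) = (2 * (Real.pi : ℂ)) * g 0 := by
  have key := hg.circleIntegral_sub_inv_smul (mem_ball_self one_pos)
  have hne : ∀ θ : ℝ, circleMap 0 1 θ ≠ 0 := by
    intro θ h
    have h2 := norm_circleMap_zero 1 θ
    rw [h] at h2; simp at h2
  rw [circleIntegral] at key
  simp only [deriv_circleMap, sub_zero, smul_eq_mul] at key
  have hcongr : ∀ θ ∈ Set.uIcc (0:ℝ) (2 * Real.pi),
      circleMap 0 1 θ * I * ((circleMap 0 1 θ)⁻¹ * g (circleMap 0 1 θ))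
        = I * g (circleMap 0 1 θ) := by
    intro θ _
    field_simp [hne θ]
  rw [intervalIntegral.integral_congr hcongr, intervalIntegral.integral_const_mul] at key
  have : I * ∫ θ in (0:ℝ)..(2 * Real.pi), g (circleMap 0 1 θ)
      = I * ((2 * (Real.pi : ℂ)) * g 0) := by
    rw [key]; ring
  exact mul_left_cancel₀ I_ne_zero this

/-- Pointwise circle-average bound for `‖f 0‖²`. -/
lemma mean_sq_aux {n : ℕ} {R : ℝ} (hR : 0 < R) {f : (Fin n → ℂ) → ℂ} {U : Set (Fin n → ℂ)}
    (hUsub : {z : Fin n → ℂ | ∀ j, ‖z j‖ ≤ R} ⊆ U)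
    (hf : DifferentiableOn ℂ f U) (z : Fin n → ℂ) (hz : ∀ j, ‖z j‖ ≤ R) :
    (‖f 0‖₊ : ℝ≥0∞) ^ 2 * ENNReal.ofReal (2 * Real.pi) ≤
      ∫⁻ θ in Set.Ioc (0:ℝ) (2 * Real.pi),
        (‖f (fun j => circleMap 0 1 θ * z j)‖₊ : ℝ≥0∞) ^ 2 := by
  set c : ℝ≥0∞ := ENNReal.ofReal (2 * Real.pi) with hc
  have hc0 : c ≠ 0 := by
    simp [hc, ENNReal.ofReal_eq_zero, not_le, Real.two_pi_pos, Real.pi_pos]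
  have hctop : c ≠ ⊤ := ENNReal.ofReal_ne_top
  have hmaps : ∀ w : ℂ, ‖w‖ ≤ 1 → (fun j => w * z j) ∈ U := by
    intro w hw
    apply hUsub
    intro j
    calc ‖w * z j‖ = ‖w‖ * ‖z j‖ := norm_mul _ _
      _ ≤ 1 * R := mul_le_mul hw (hz j) (norm_nonneg _) zero_le_one
      _ = R := one_mul R
  have hmapd : Differentiable ℂ (fun w : ℂ => fun j : Fin n => w * z j) :=
    differentiable_pi.mpr fun j => differentiable_id.mul_const (z j)
  have hg : DifferentiableOn ℂ (fun w => f (fun j => w * z j)) (closedBall 0 1) := by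
    apply hf.comp hmapd.differentiableOn
    intro w hw
    exact hmaps w (mem_closedBall_zero_iff.mp hw)
  have hmean := circle_mean_value_aux hg
  have h00 : (fun j : Fin n => (0:ℂ) * z j) = 0 := funext fun j => zero_mul _
  rw [h00] at hmean
  set h : ℝ → ℂ := fun θ => f (fun j => circleMap 0 1 θ * z j) with hhdef
  have hh : Continuous h := by
    apply hf.continuousOn.comp_continuous
    · exact continuous_pi fun j => (continuous_circleMap 0 1).mul continuous_const
    · intro θ
      apply hmaps
      have := norm_circleMap_zero 1 θ
      simp only [this, abs_one, le_refl]
  have h1 : 2 * Real.pi * ‖f 0‖ ≤ ∫ θ in Set.Ioc (0:ℝ) (2 * Real.pi), ‖h θ‖ := by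
    have e1 : 2 * Real.pi * ‖f 0‖ = ‖∫ θ in Set.Ioc (0:ℝ) (2 * Real.pi), h θ‖ := by
      rw [← intervalIntegral.integral_of_le Real.two_pi_pos.le, hmean, norm_mul]
      congr 1
      have : (2 * (Real.pi : ℂ)) = ((2 * Real.pi : ℝ) : ℂ) := by push_cast; ring
      rw [this, Complex.norm_real, Real.norm_eq_abs, abs_of_pos Real.two_pi_pos]
    rw [e1]
    exact norm_integral_le_integral_norm _
  have hint : IntegrableOn (fun θ => ‖h θ‖) (Set.Ioc (0:ℝ) (2 * Real.pi)) := by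
    apply (hh.norm.continuousOn.integrableOn_compact isCompact_Icc).mono_set
      Ioc_subset_Icc_self
  have h2 : c * (‖f 0‖₊ : ℝ≥0∞) ≤ ∫⁻ θ in Set.Ioc (0:ℝ) (2 * Real.pi), (‖h θ‖₊ : ℝ≥0∞) := by
    have e2 : ∫⁻ θ in Set.Ioc (0:ℝ) (2 * Real.pi), (‖h θ‖₊ : ℝ≥0∞)
        = ENNReal.ofReal (∫ θ in Set.Ioc (0:ℝ) (2 * Real.pi), ‖h θ‖) := by
      rw [MeasureTheory.ofReal_integral_eq_lintegral_ofReal hint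
        (ae_of_all _ fun θ => norm_nonneg _)]
      simp_rw [ofReal_norm, enorm_eq_nnnorm]
    rw [e2]
    calc c * (‖f 0‖₊ : ℝ≥0∞) = ENNReal.ofReal (2 * Real.pi * ‖f 0‖) := by
          rw [ENNReal.ofReal_mul Real.two_pi_pos.le, ofReal_norm, enorm_eq_nnnorm]
      _ ≤ _ := ENNReal.ofReal_le_ofReal h1
  -- Cauchy-Schwarz
  set μT := volume.restrict (Set.Ioc (0:ℝ) (2 * Real.pi)) with hμT
  have hGae : AEMeasurable (fun θ => (‖h θ‖₊ : ℝ≥0∞)) μT :=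
    (measurable_coe_nnreal_ennreal.comp hh.measurable.nnnorm).aemeasurable
  have hconj : Real.HolderConjugate 2 2 := Real.HolderConjugate.two_two
  have hcs := ENNReal.lintegral_mul_le_Lp_mul_Lq μT hconj hGae
    (aemeasurable_const (b := (1:ℝ≥0∞)))
  simp only [Pi.mul_apply, mul_one, ENNReal.one_rpow, lintegral_const, one_mul] at hcs
  have hμTuniv : μT Set.univ = c := by
    rw [hμT, Measure.restrict_apply_univ, Real.volume_Ioc, sub_zero]
  rw [hμTuniv] at hcs
  set B := ∫⁻ θ, (‖h θ‖₊ : ℝ≥0∞) ^ (2:ℝ) ∂μT with hB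
  -- goal's integrand uses ^ (2:ℕ)
  have hBeq : B = ∫⁻ θ in Set.Ioc (0:ℝ) (2 * Real.pi), (‖h θ‖₊ : ℝ≥0∞) ^ 2 := by
    rw [hB, hμT]
    congr 1
    funext θ
    rw [show ((2:ℝ) = ((2:ℕ):ℝ)) by norm_num, ENNReal.rpow_natCast]
  have h3 : c * (‖f 0‖₊ : ℝ≥0∞) ≤ B ^ (1/2 : ℝ) * c ^ (1/2 : ℝ) := le_trans h2 hcs
  have h4 : (‖f 0‖₊ : ℝ≥0∞) ^ 2 * c * c ≤ B * c := by
    have hsq := mul_le_mul' h3 h3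
    calc (‖f 0‖₊ : ℝ≥0∞) ^ 2 * c * c
        = (c * (‖f 0‖₊ : ℝ≥0∞)) * (c * (‖f 0‖₊ : ℝ≥0∞)) := by ring
      _ ≤ (B ^ (1/2:ℝ) * c ^ (1/2:ℝ)) * (B ^ (1/2:ℝ) * c ^ (1/2:ℝ)) := hsq
      _ = (B ^ (1/2:ℝ) * B ^ (1/2:ℝ)) * (c ^ (1/2:ℝ) * c ^ (1/2:ℝ)) := by ring
      _ = B * c := by
          rw [← ENNReal.rpow_add_of_nonneg (1/2) (1/2) (by norm_num) (by norm_num),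
            ← ENNReal.rpow_add_of_nonneg (x := c) (1/2) (1/2) (by norm_num) (by norm_num)]
          norm_num
  have := (ENNReal.mul_le_mul_iff_left hc0 hctop).mp h4
  rwa [hBeq] at this

/-- Weighted submean inequality on polydiscs: if `f` is holomorphic on an open
set containing the closed polydisc of polyradius `R` and `φ₀(z) = ∑ j, λ j |z j|²`
(the `λ j` arbitrary real numbers), then
`|f(0)|² ∫_{Δ_R} e^{−φ₀} ≤ ∫_{Δ_R} |f|² e^{−φ₀}`. -/
theorem weighted_submean_polydisc (n : ℕ) (lam : Fin n → ℝ) (R : ℝ) (hR : 0 < R)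
    (f : (Fin n → ℂ) → ℂ) (U : Set (Fin n → ℂ)) (hU : IsOpen U)
    (hUsub : {z : Fin n → ℂ | ∀ j, ‖z j‖ ≤ R} ⊆ U)
    (hf : DifferentiableOn ℂ f U) :
    (‖f 0‖₊ : ℝ≥0∞) ^ 2 *
        ∫⁻ z in {z : Fin n → ℂ | ∀ j, ‖z j‖ < R},
          ENNReal.ofReal (Real.exp (-(∑ j : Fin n, lam j * ‖z j‖ ^ 2)))
      ≤ ∫⁻ z in {z : Fin n → ℂ | ∀ j, ‖z j‖ < R},
          (‖f z‖₊ : ℝ≥0∞) ^ 2 *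
            ENNReal.ofReal (Real.exp (-(∑ j : Fin n, lam j * ‖z j‖ ^ 2))) := by
  classical
  set S : Set (Fin n → ℂ) := {z | ∀ j, ‖z j‖ < R} with hSdef
  set T : Set ℝ := Set.Ioc (0:ℝ) (2 * Real.pi) with hTdef
  set w : (Fin n → ℂ) → ℝ≥0∞ :=
    fun z => ENNReal.ofReal (Real.exp (-(∑ j : Fin n, lam j * ‖z j‖ ^ 2))) with hwdef
  set c : ℝ≥0∞ := ENNReal.ofReal (2 * Real.pi) with hcdef
  set A : ℝ≥0∞ := (‖f 0‖₊ : ℝ≥0∞) ^ 2 with hAdef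
  have hc0 : c ≠ 0 := by
    simp [hcdef, ENNReal.ofReal_eq_zero, not_le, Real.two_pi_pos, Real.pi_pos]
  have hctop : c ≠ ⊤ := ENNReal.ofReal_ne_top
  have hSopen : IsOpen S := by
    rw [hSdef]
    have : {z : Fin n → ℂ | ∀ j, ‖z j‖ < R} = ⋂ j, {z : Fin n → ℂ | ‖z j‖ < R} := by
      ext z; simp
    rw [this]
    exact isOpen_iInter_of_finite fun j =>
      isOpen_lt ((continuous_apply j).norm) continuous_const
  have hSmeas : MeasurableSet S := hSopen.measurableSet
  have hwmeas : Measurable w := by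
    apply ENNReal.measurable_ofReal.comp
    apply (Real.continuous_exp.comp ?_).measurable
    exact (continuous_finset_sum _ fun j _ =>
      continuous_const.mul (((continuous_apply j).norm).pow 2)).neg
  have hwS : ∀ (u : ℂ), ‖u‖ = 1 → ∀ z, w (fun j => u * z j) = w z := by
    intro u hu z
    have hu' : ‖u‖ = 1 := hu
    simp [hwdef, norm_mul, hu', one_mul]
  -- the rotation map in both variables
  set Φ : (Fin n → ℂ) × ℝ → (Fin n → ℂ) :=
    fun p => fun j => circleMap 0 1 p.2 * p.1 j with hΦdef
  have hΦc : Continuous Φ :=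
    continuous_pi fun j => ((continuous_circleMap 0 1).comp continuous_snd).mul
      ((continuous_apply j).comp continuous_fst)
  have hnormcm : ∀ θ : ℝ, ‖circleMap 0 1 θ‖ = 1 := by
    intro θ
    have := norm_circleMap_zero 1 θ
    simpa using this
  -- pointwise bound on S
  have hpt : ∀ z ∈ S, A * c ≤ ∫⁻ θ in T, (‖f (fun j => circleMap 0 1 θ * z j)‖₊ : ℝ≥0∞) ^ 2 :=
    fun z hz => mean_sq_aux hR hUsub hf z (fun j => (hz j).le)
  -- measurability on the product
  have hae : AEMeasurable (Function.uncurry fun (z : Fin n → ℂ) (θ : ℝ) =>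
      (‖f (fun j => circleMap 0 1 θ * z j)‖₊ : ℝ≥0∞) ^ 2 * w z)
      ((volume.restrict S).prod (volume.restrict T)) := by
    rw [Measure.prod_restrict]
    have hW : MeasurableSet (Φ ⁻¹' U) := (hU.preimage hΦc).measurableSet
    have hsubW : S ×ˢ T ⊆ Φ ⁻¹' U := by
      rintro ⟨z, θ⟩ ⟨hz, -⟩
      apply hUsub
      intro j
      calc ‖circleMap 0 1 θ * z j‖ = ‖circleMap 0 1 θ‖ * ‖z j‖ := norm_mul _ _
        _ = ‖z j‖ := by rw [hnormcm θ, one_mul]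
        _ ≤ R := (hz j).le
    have hF1 : ContinuousOn (fun p => f (Φ p)) (Φ ⁻¹' U) :=
      hf.continuousOn.comp hΦc.continuousOn fun p hp => hp
    have h1 : AEMeasurable (fun p => (‖f (Φ p)‖₊ : ℝ≥0∞) ^ 2)
        ((volume.prod volume).restrict (Φ ⁻¹' U)) := by
      have haux : AEMeasurable (fun p => ‖f (Φ p)‖₊)
          ((volume.prod volume).restrict (Φ ⁻¹' U)) := hF1.nnnorm.aemeasurable hW
      exact (measurable_coe_nnreal_ennreal.comp_aemeasurable haux).pow_const 2
    have h1' : AEMeasurable (fun p => (‖f (Φ p)‖₊ : ℝ≥0∞) ^ 2)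
        ((volume.prod volume).restrict (S ×ˢ T)) :=
      h1.mono_measure (Measure.restrict_mono hsubW le_rfl)
    exact h1'.mul ((hwmeas.comp measurable_fst).aemeasurable)
  -- per-θ rotation invariance
  have hrot : ∀ θ : ℝ,
      (∫⁻ z in S, (‖f (fun j => circleMap 0 1 θ * z j)‖₊ : ℝ≥0∞) ^ 2 * w z)
        = ∫⁻ z in S, (‖f z‖₊ : ℝ≥0∞) ^ 2 * w z := by
    intro θ
    set u : ℂ := circleMap 0 1 θ with hudef
    have hu : ‖u‖ = 1 := hnormcm θ
    have hu0 : u ≠ 0 := by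
      intro h; rw [h] at hu; simp at hu
    set e : (Fin n → ℂ) ≃ₜ (Fin n → ℂ) :=
      Homeomorph.piCongrRight (fun _ : Fin n => Homeomorph.mulLeft₀ u hu0) with hedef
    have hecoe : ⇑e = fun (z : Fin n → ℂ) (j : Fin n) => u * z j := rfl
    have h1 : MeasurePreserving (fun v : ℂ => u * v) volume volume := by
      have heq : (fun v : ℂ => u * v) = ⇑(rotation (Circle.exp θ)) := by
        funext v
        simp [rotation_apply, Circle.coe_exp, hudef, circleMap]
      rw [heq]
      exact LinearIsometryEquiv.measurePreserving _
    have hmp : MeasurePreserving (⇑e) volume volume := by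
      rw [hecoe]
      exact MeasureTheory.volume_preserving_pi fun _ => h1
    have hemb : MeasurableEmbedding (⇑e) := e.measurableEmbedding
    have hpre : (⇑e) ⁻¹' S = S := by
      ext z
      simp only [hecoe, Set.mem_preimage, hSdef, Set.mem_setOf_eq, norm_mul, hu, one_mul]
    calc ∫⁻ z in S, (‖f (fun j => circleMap 0 1 θ * z j)‖₊ : ℝ≥0∞) ^ 2 * w z
        = ∫⁻ z in S, (‖f (e z)‖₊ : ℝ≥0∞) ^ 2 * w (e z) := by
          apply lintegral_congr
          intro z
          rw [hecoe]
          rw [hwS u hu z]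
      _ = ∫⁻ z in (⇑e) ⁻¹' S, (‖f (e z)‖₊ : ℝ≥0∞) ^ 2 * w (e z) := by rw [hpre]
      _ = ∫⁻ y in S, (‖f y‖₊ : ℝ≥0∞) ^ 2 * w y :=
          hmp.setLIntegral_comp_preimage_emb hemb (fun y => (‖f y‖₊ : ℝ≥0∞) ^ 2 * w y) S
  -- main chain
  rw [← ENNReal.mul_le_mul_iff_left hc0 hctop]
  calc A * (∫⁻ z in S, w z) * c
      = ∫⁻ z in S, (A * c) * w z := by
        rw [lintegral_const_mul' (A * c) w
          (ENNReal.mul_ne_top (ENNReal.pow_ne_top ENNReal.coe_ne_top) hctop)]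
        ring
    _ ≤ ∫⁻ z in S, (∫⁻ θ in T, (‖f (fun j => circleMap 0 1 θ * z j)‖₊ : ℝ≥0∞) ^ 2) * w z := by
        apply lintegral_mono_ae
        rw [ae_restrict_iff' hSmeas]
        apply ae_of_all
        intro z hz
        exact mul_le_mul_left (hpt z hz) (w z)
    _ = ∫⁻ z in S, ∫⁻ θ in T, (‖f (fun j => circleMap 0 1 θ * z j)‖₊ : ℝ≥0∞) ^ 2 * w z := by
        apply lintegral_congr_ae
        apply Filter.eventuallyEq_of_mem (self_mem_ae_restrict hSmeas)
        intro z hz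
        have hzc : Continuous (fun θ : ℝ => f (fun j => circleMap 0 1 θ * z j)) := by
          apply hf.continuousOn.comp_continuous
          · exact continuous_pi fun j => (continuous_circleMap 0 1).mul continuous_const
          · intro θ
            apply hUsub
            intro j
            calc ‖circleMap 0 1 θ * z j‖ = ‖circleMap 0 1 θ‖ * ‖z j‖ := norm_mul _ _
              _ = ‖z j‖ := by rw [hnormcm θ, one_mul]
              _ ≤ R := (hz j).le
        have hzm : AEMeasurable
            (fun θ : ℝ => (‖f (fun j => circleMap 0 1 θ * z j)‖₊ : ℝ≥0∞) ^ 2)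
            (volume.restrict T) :=
          ((measurable_coe_nnreal_ennreal.comp hzc.measurable.nnnorm).pow_const 2).aemeasurable
        exact (lintegral_mul_const'' (w z) hzm).symm
    _ = ∫⁻ θ in T, ∫⁻ z in S, (‖f (fun j => circleMap 0 1 θ * z j)‖₊ : ℝ≥0∞) ^ 2 * w z :=
        lintegral_lintegral_swap hae
    _ = ∫⁻ θ in T, ∫⁻ z in S, (‖f z‖₊ : ℝ≥0∞) ^ 2 * w z := by
        apply lintegral_congr
        intro θ
        exact hrot θ
    _ = (∫⁻ z in S, (‖f z‖₊ : ℝ≥0∞) ^ 2 * w z) * c := by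
        rw [lintegral_const]
        congr 1
        rw [Measure.restrict_apply_univ, hTdef, Real.volume_Ioc, sub_zero]
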